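/- The orthogonal complement of 𝓥 in H (with respect to the inner product ⟨·,·⟩ of H) is 𝓥^⊥ = {(v0, v_·, v1) ∈ H : there exists ν ∈ Π such that v_t = Z_tᵀ J ν for almost every t ∈ [0,1], g0(Z0v0 − J0ν, Z0w) = 0 for all w ∈ ℝ^{n0}, and g1(Φ̃Z1v1 − J1Φ̃ν, Φ̃Z1w) = 0 for all w ∈ ℝ^{n1}}. -/

import Mathlib

open Matrix MeasureTheory

noncomputable section

attribute [local instance] Matrix.normedAddCommGroup

/-- The standard symplectic matrix `J = [[0, −I],[I, 0]]` on `ℝ^{2n} = ℝⁿ ⊕ ℝⁿ`. -/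
def Jmat (n : ℕ) : Matrix (Fin n ⊕ Fin n) (Fin n ⊕ Fin n) ℝ :=
  Matrix.fromBlocks 0 (-1) 1 0

/-- The standard symplectic form `σ(a,b) = ⟨Ja, b⟩` on `ℝ^{2n}`. -/
def symp (n : ℕ) (a b : (Fin n ⊕ Fin n) → ℝ) : ℝ := (Jmat n *ᵥ a) ⬝ᵥ b

/-- The scalar product determined by a (positive definite) matrix `G`. -/
def gApp {n : ℕ} (G : Matrix (Fin n ⊕ Fin n) (Fin n ⊕ Fin n) ℝ)
    (x y : (Fin n ⊕ Fin n) → ℝ) : ℝ := x ⬝ᵥ (G *ᵥ y)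

lemma mulVec_dot {ι κ : Type*} [Fintype ι] [Fintype κ] (M : Matrix ι κ ℝ) (a : κ → ℝ)
    (b : ι → ℝ) : (M *ᵥ a) ⬝ᵥ b = a ⬝ᵥ (Mᵀ *ᵥ b) := by
  rw [Matrix.dotProduct_mulVec a Mᵀ b, Matrix.vecMul_transpose]

lemma Jmat_mul_Jmat (n : ℕ) : Jmat n * Jmat n = -1 := by
  simp only [Jmat, Matrix.fromBlocks_multiply]
  ext (i|i) (j|j) <;> simp [Matrix.fromBlocks, Matrix.one_apply, eq_comm]

lemma Jmat_transpose (n : ℕ) : (Jmat n)ᵀ = -Jmat n := by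
  simp only [Jmat, Matrix.fromBlocks_transpose]
  ext (i|i) (j|j) <;> simp [Matrix.fromBlocks]

lemma symp_mulVec {n : ℕ} {Φ : Matrix (Fin n ⊕ Fin n) (Fin n ⊕ Fin n) ℝ}
    (hΦ : Φᵀ * Jmat n * Φ = Jmat n) (a b : (Fin n ⊕ Fin n) → ℝ) :
    symp n (Φ *ᵥ a) (Φ *ᵥ b) = symp n a b := by
  unfold symp
  rw [Matrix.mulVec_mulVec, mulVec_dot, Matrix.mulVec_mulVec, mulVec_dot]
  congr 1
  have : (Jmat n * Φ)ᵀ * Φ = (Jmat n)ᵀ := by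
    rw [Matrix.transpose_mul, Jmat_transpose, Matrix.mul_assoc]
    rw [show -Jmat n * Φ = -(Jmat n * Φ) by simp [Matrix.neg_mul]]
    rw [Matrix.mul_neg, ← Matrix.mul_assoc, hΦ]
  rw [← Matrix.mulVec_mulVec, ← this, Matrix.mulVec_mulVec]

lemma gApp_sub_left {n : ℕ} (G : Matrix (Fin n ⊕ Fin n) (Fin n ⊕ Fin n) ℝ)
    (x y z : (Fin n ⊕ Fin n) → ℝ) : gApp G (x - y) z = gApp G x z - gApp G y z := by
  simp [gApp, sub_dotProduct]

lemma gApp_comm {n : ℕ} {G : Matrix (Fin n ⊕ Fin n) (Fin n ⊕ Fin n) ℝ} (hG : Gᵀ = G)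
    (x y : (Fin n ⊕ Fin n) → ℝ) : gApp G x y = gApp G y x := by
  unfold gApp
  conv_lhs => rw [← hG]
  rw [← mulVec_dot, dotProduct_comm]

lemma intConv (μ : Measure ℝ) (hμ : μ = volume.restrict (Set.Icc (0:ℝ) 1))
    {F : Type*} [NormedAddCommGroup F] [NormedSpace ℝ F] (f : ℝ → F) :
    (∫ t in (0:ℝ)..1, f t) = ∫ t, f t ∂μ := by
  rw [hμ, intervalIntegral.integral_of_le zero_le_one,
    ← Measure.restrict_congr_set Ioc_ae_eq_Icc]

lemma lagrangian_max {n : ℕ} (Vpi : Submodule ℝ ((Fin n ⊕ Fin n) → ℝ))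
    (hdim : Module.finrank ℝ Vpi = n)
    (hLag : ∀ x ∈ Vpi, ∀ y ∈ Vpi, symp n x y = 0)
    (x : (Fin n ⊕ Fin n) → ℝ) (hx : ∀ p ∈ Vpi, symp n p x = 0) : x ∈ Vpi := by
  classical
  set e : ((Fin n ⊕ Fin n) → ℝ) ≃ₗ[ℝ] EuclideanSpace ℝ (Fin n ⊕ Fin n) :=
    (WithLp.linearEquiv 2 ℝ ((Fin n ⊕ Fin n) → ℝ)).symm with he
  have hinner : ∀ a b : (Fin n ⊕ Fin n) → ℝ,
      (inner ℝ (e a) (e b) : ℝ) = a ⬝ᵥ b := by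
    intro a b
    simp [PiLp.inner_apply, RCLike.inner_apply, dotProduct, he, mul_comm]
  have hJJ : Jmat n * -Jmat n = 1 := by rw [Matrix.mul_neg, Jmat_mul_Jmat]; simp
  have hJJ' : -Jmat n * Jmat n = 1 := by rw [Matrix.neg_mul, Jmat_mul_Jmat]; simp
  set JL : ((Fin n ⊕ Fin n) → ℝ) ≃ₗ[ℝ] ((Fin n ⊕ Fin n) → ℝ) :=
    LinearEquiv.ofLinear (Matrix.mulVecLin (Jmat n)) (Matrix.mulVecLin (-Jmat n))
      (by rw [← Matrix.mulVecLin_mul, hJJ, Matrix.mulVecLin_one])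
      (by rw [← Matrix.mulVecLin_mul, hJJ', Matrix.mulVecLin_one]) with hJL
  set K : Submodule ℝ (EuclideanSpace ℝ (Fin n ⊕ Fin n)) :=
    (Vpi.map (Matrix.mulVecLin (Jmat n))).map (e : ((Fin n ⊕ Fin n) → ℝ) →ₗ[ℝ] _) with hK
  have hKd : Module.finrank ℝ K = n := by
    rw [hK, LinearEquiv.finrank_map_eq]
    have h2 : Vpi.map (Matrix.mulVecLin (Jmat n)) =
        Vpi.map (JL : ((Fin n ⊕ Fin n) → ℝ) →ₗ[ℝ] ((Fin n ⊕ Fin n) → ℝ)) := rfl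
    rw [h2, LinearEquiv.finrank_map_eq, hdim]
  have htot : Module.finrank ℝ (EuclideanSpace ℝ (Fin n ⊕ Fin n)) = n + n := by
    simp [finrank_euclideanSpace]
  have horth : Kᗮ = Vpi.map (e : ((Fin n ⊕ Fin n) → ℝ) →ₗ[ℝ] _) := by
    symm
    apply Submodule.eq_of_le_of_finrank_eq
    · rintro z hz
      obtain ⟨q, hq, rfl⟩ := Submodule.mem_map.1 hz
      rw [Submodule.mem_orthogonal]
      intro u hu
      obtain ⟨y, hy, rfl⟩ := Submodule.mem_map.1 hu
      obtain ⟨p, hp, rfl⟩ := Submodule.mem_map.1 hy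
      simp only [LinearEquiv.coe_coe]
      rw [hinner]
      exact hLag p hp q hq
    · have h1 : Module.finrank ℝ
          (Vpi.map (e : ((Fin n ⊕ Fin n) → ℝ) →ₗ[ℝ] EuclideanSpace ℝ (Fin n ⊕ Fin n))) = n := by
        rw [LinearEquiv.finrank_map_eq, hdim]
      have h2 := Submodule.finrank_add_finrank_orthogonal K
      rw [hKd, htot] at h2
      omega
  have hxK : e x ∈ Kᗮ := by
    rw [Submodule.mem_orthogonal]
    intro u hu
    obtain ⟨y, hy, rfl⟩ := Submodule.mem_map.1 hu
    obtain ⟨p, hp, rfl⟩ := Submodule.mem_map.1 hy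
    simp only [LinearEquiv.coe_coe]
    rw [hinner]
    exact hx p hp
  rw [horth] at hxK
  obtain ⟨p, hp, hpe⟩ := Submodule.mem_map.1 hxK
  have hpx : p = x := e.injective (by simpa using hpe)
  rwa [← hpx]

lemma gApp_zero_left {n : ℕ} (G : Matrix (Fin n ⊕ Fin n) (Fin n ⊕ Fin n) ℝ)
    (y : (Fin n ⊕ Fin n) → ℝ) : gApp G 0 y = 0 := by
  simp [gApp, zero_dotProduct]

set_option maxHeartbeats 1000000 in
/-- description of the orthogonal complement of `𝓥` in
`H = ℝ^{n0} × L²([0,1];ℝ^k) × ℝ^{n1}`. -/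
theorem statement2
    (n k n0 n1 : ℕ)
    (μ : Measure ℝ) (hμ : μ = volume.restrict (Set.Icc (0:ℝ) 1))
    (Z : ℝ → Matrix (Fin n ⊕ Fin n) (Fin k) ℝ)
    (hZcont : ContinuousOn Z (Set.Icc 0 1))
    (Z0 : Matrix (Fin n ⊕ Fin n) (Fin n0) ℝ) (hZ0inj : Function.Injective Z0.mulVec)
    (Z1 : Matrix (Fin n ⊕ Fin n) (Fin n1) ℝ) (hZ1inj : Function.Injective Z1.mulVec)
    (Φm : Matrix (Fin n ⊕ Fin n) (Fin n ⊕ Fin n) ℝ)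
    (hΦsymp : Φmᵀ * Jmat n * Φm = Jmat n)
    (hΦZ1inj : Function.Injective (Φm * Z1).mulVec)
    (Vpi : Submodule ℝ ((Fin n ⊕ Fin n) → ℝ))
    (hVpidim : Module.finrank ℝ Vpi = n)
    (hVpiLag : ∀ x ∈ Vpi, ∀ y ∈ Vpi, symp n x y = 0)
    (G0 G1 : Matrix (Fin n ⊕ Fin n) (Fin n ⊕ Fin n) ℝ)
    (hG0 : G0.PosDef) (hG1 : G1.PosDef)
    (J0 J1 : Matrix (Fin n ⊕ Fin n) (Fin n ⊕ Fin n) ℝ)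
    (hJ0 : ∀ x y, gApp G0 (J0 *ᵥ x) y = symp n x y) (hJ0unit : IsUnit J0)
    (hJ1 : ∀ x y, gApp G1 (J1 *ᵥ x) y = symp n x y) (hJ1unit : IsUnit J1)
    -- surjectivity of `u ↦ ∫₀¹ Z_t u_t dt` composed with the quotient map `ℝ^{2n} → ℝ^{2n}/Π`
    (hsurj : ∀ w : (Fin n ⊕ Fin n) → ℝ, ∃ uc : Lp (Fin k → ℝ) 2 μ,
      (∫ t in (0:ℝ)..1, Z t *ᵥ uc t) - w ∈ Vpi) :
    {v : (Fin n0 → ℝ) × Lp (Fin k → ℝ) 2 μ × (Fin n1 → ℝ) |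
      ∀ u : (Fin n0 → ℝ) × Lp (Fin k → ℝ) 2 μ × (Fin n1 → ℝ),
        Z0 *ᵥ u.1 + (∫ t in (0:ℝ)..1, Z t *ᵥ u.2.1 t) + Z1 *ᵥ u.2.2 ∈ Vpi →
        (∫ t in (0:ℝ)..1, (u.2.1 t) ⬝ᵥ (v.2.1 t))
          + gApp G0 (Z0 *ᵥ u.1) (Z0 *ᵥ v.1)
          + gApp G1 ((Φm * Z1) *ᵥ u.2.2) ((Φm * Z1) *ᵥ v.2.2) = 0}
    =
    {v : (Fin n0 → ℝ) × Lp (Fin k → ℝ) 2 μ × (Fin n1 → ℝ) |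
      ∃ ν ∈ Vpi,
        (∀ᵐ t ∂μ, v.2.1 t = (Z t)ᵀ *ᵥ (Jmat n *ᵥ ν)) ∧
        (∀ w : Fin n0 → ℝ, gApp G0 (Z0 *ᵥ v.1 - J0 *ᵥ ν) (Z0 *ᵥ w) = 0) ∧
        (∀ w : Fin n1 → ℝ,
          gApp G1 ((Φm * Z1) *ᵥ v.2.2 - (J1 * Φm) *ᵥ ν) ((Φm * Z1) *ᵥ w) = 0)} := by
  classical
  have hfin : IsFiniteMeasure μ := by
    rw [hμ]
    refine ⟨?_⟩
    rw [Measure.restrict_apply_univ]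
    simp [Real.volume_Icc]
  have hG0sym : G0ᵀ = G0 := by
    ext i j
    have h := congrFun (congrFun hG0.1 i) j
    simpa [Matrix.conjTranspose_apply] using h
  have hG1sym : G1ᵀ = G1 := by
    ext i j
    have h := congrFun (congrFun hG1.1 i) j
    simpa [Matrix.conjTranspose_apply] using h
  obtain ⟨C, hC⟩ := (isCompact_Icc : IsCompact (Set.Icc (0:ℝ) 1)).exists_bound_of_continuousOn hZcont
  have hC0 : (0:ℝ) ≤ C := le_trans (norm_nonneg (Z 0)) (hC 0 (by norm_num))
  have hmem : ∀ᵐ t ∂μ, t ∈ Set.Icc (0:ℝ) 1 := by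
    rw [hμ]; exact ae_restrict_mem measurableSet_Icc
  have hZae : ∀ᵐ t ∂μ, ‖Z t‖ ≤ C := hmem.mono fun t ht => hC t ht
  have hZcol : ∀ j : Fin k, AEStronglyMeasurable (fun t => (fun i => Z t i j)) μ := by
    intro j
    rw [hμ]
    refine ContinuousOn.aestronglyMeasurable ?_ measurableSet_Icc
    exact (continuous_pi fun i =>
      (continuous_apply j).comp (continuous_apply i)).comp_continuousOn hZcont
  let prj : Fin k → ((Fin k → ℝ) →L[ℝ] ℝ) := fun j =>
    ContinuousLinearMap.proj (R := ℝ) (φ := fun _ : Fin k => ℝ) j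
  have hintuc : ∀ uc : Lp (Fin k → ℝ) 2 μ, Integrable (fun t => Z t *ᵥ uc t) μ := by
    intro uc
    have hI : Integrable (fun t => uc t) μ := (Lp.memLp uc).integrable one_le_two
    have heq : (fun t => Z t *ᵥ uc t) = fun t => ∑ j, (uc t j) • (fun i => Z t i j) := by
      funext t
      funext i
      simp [Matrix.mulVec, dotProduct, Finset.sum_apply, mul_comm]
    rw [heq]
    refine integrable_finset_sum _ fun j _ => ?_
    have hφ : MemLp (fun t => uc t j) 1 μ :=
      memLp_one_iff_integrable.2 ((prj j).integrable_comp hI)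
    have hcol : MemLp (fun t => (fun i => Z t i j)) ⊤ μ := by
      refine memLp_top_of_bound (hZcol j) C (hZae.mono fun t ht => ?_)
      refine (pi_norm_le_iff_of_nonneg hC0).2 fun i => ?_
      exact le_trans (Matrix.norm_entry_le_entrywise_sup_norm (Z t)) ht
    exact memLp_one_iff_integrable.1 (MemLp.smul (p := 1) (q := ⊤) (r := 1) hcol hφ)
  have hdot : ∀ f g : Lp (Fin k → ℝ) 2 μ, Integrable (fun t => (f t) ⬝ᵥ (g t)) μ := by
    intro f g
    have heq : (fun t => (f t) ⬝ᵥ (g t)) = fun t => ∑ j, f t j * g t j := by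
      funext t; rfl
    rw [heq]
    refine integrable_finset_sum _ fun j _ => ?_
    have hf2 : MemLp (fun t => f t j) 2 μ :=
      (prj j).comp_memLp' (Lp.memLp f)
    have hg2 : MemLp (fun t => g t j) 2 μ :=
      (prj j).comp_memLp' (Lp.memLp g)
    have h1 : (1:ENNReal)/1 = 1/2 + 1/2 := by
      rw [ENNReal.add_halves, div_one]
    exact memLp_one_iff_integrable.1 (MemLp.smul (p := 2) (q := 2) (r := 1) hg2 hf2)
  let Lmap : Lp (Fin k → ℝ) 2 μ →ₗ[ℝ] ((Fin n ⊕ Fin n) → ℝ) :=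
    { toFun := fun uc => ∫ t, Z t *ᵥ uc t ∂μ
      map_add' := by
        intro a b
        have h1 : (fun t => Z t *ᵥ (a + b : Lp (Fin k → ℝ) 2 μ) t) =ᵐ[μ]
            fun t => Z t *ᵥ a t + Z t *ᵥ b t := by
          filter_upwards [Lp.coeFn_add a b] with t ht
          rw [ht]
          exact Matrix.mulVec_add _ _ _
        rw [integral_congr_ae h1, integral_add (hintuc a) (hintuc b)]
      map_smul' := by
        intro c a
        have h1 : (fun t => Z t *ᵥ (c • a : Lp (Fin k → ℝ) 2 μ) t) =ᵐ[μ]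
            fun t => c • (Z t *ᵥ a t) := by
          filter_upwards [Lp.coeFn_smul c a] with t ht
          rw [ht, Pi.smul_apply]
          exact Matrix.mulVec_smul _ c _
        rw [RingHom.id_apply, integral_congr_ae h1, integral_smul] }
  have hL : ∀ uc : Lp (Fin k → ℝ) 2 μ,
      (∫ t in (0:ℝ)..1, Z t *ᵥ uc t) = Lmap uc := fun uc => intConv μ hμ _
  have hpull : ∀ (c : (Fin n ⊕ Fin n) → ℝ) (uc : Lp (Fin k → ℝ) 2 μ),
      (∫ t, (Z t *ᵥ uc t) ⬝ᵥ c ∂μ) = (Lmap uc) ⬝ᵥ c := by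
    intro c uc
    let lin : ((Fin n ⊕ Fin n) → ℝ) →ₗ[ℝ] ℝ :=
      { toFun := fun y => y ⬝ᵥ c
        map_add' := fun a b => add_dotProduct a b c
        map_smul' := fun r a => by simp [smul_dotProduct] }
    have h := (LinearMap.toContinuousLinearMap lin).integral_comp_comm (hintuc uc)
    have h2 : ∀ y, (LinearMap.toContinuousLinearMap lin) y = y ⬝ᵥ c := fun y => rfl
    simp only [h2] at h
    exact h
  apply Set.eq_of_subset_of_subset
  · -- hard direction
    intro v hv
    simp only [Set.mem_setOf_eq] at hv ⊢
    set vc := v.2.1 with hvc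
    let Pv : Lp (Fin k → ℝ) 2 μ →ₗ[ℝ] ℝ :=
      { toFun := fun f => ∫ t, (f t) ⬝ᵥ (vc t) ∂μ
        map_add' := by
          intro a b
          have h1 : (fun t => ((a + b : Lp (Fin k → ℝ) 2 μ) t) ⬝ᵥ (vc t)) =ᵐ[μ]
              fun t => (a t) ⬝ᵥ (vc t) + (b t) ⬝ᵥ (vc t) := by
            filter_upwards [Lp.coeFn_add a b] with t ht
            rw [ht]
            exact add_dotProduct _ _ _
          rw [integral_congr_ae h1, integral_add (hdot a vc) (hdot b vc)]
        map_smul' := by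
          intro c a
          have h1 : (fun t => ((c • a : Lp (Fin k → ℝ) 2 μ) t) ⬝ᵥ (vc t)) =ᵐ[μ]
              fun t => c • ((a t) ⬝ᵥ (vc t)) := by
            filter_upwards [Lp.coeFn_smul c a] with t ht
            rw [ht, Pi.smul_apply]
            exact smul_dotProduct c _ _
          rw [RingHom.id_apply, integral_congr_ae h1, integral_smul] }
    have hφ0 : ∀ uc : Lp (Fin k → ℝ) 2 μ, Lmap uc ∈ Vpi → Pv uc = 0 := by
      intro uc hucm
      have h := hv (0, uc, 0)
      simp only [Matrix.mulVec_zero, zero_add, add_zero, gApp_zero_left] at h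
      rw [hL uc] at h
      have h2 := h hucm
      rw [intConv μ hμ] at h2
      exact h2
    let eb : (Fin n ⊕ Fin n) → ((Fin n ⊕ Fin n) → ℝ) := fun i j => if i = j then 1 else 0
    have hbase : ∀ i, ∃ uc : Lp (Fin k → ℝ) 2 μ, Lmap uc - eb i ∈ Vpi := by
      intro i
      obtain ⟨uc, h⟩ := hsurj (eb i)
      exact ⟨uc, by rwa [hL uc] at h⟩
    choose U hU using hbase
    let m : (Fin n ⊕ Fin n) → ℝ := fun i => Pv (U i)
    have hsum : ∀ x : (Fin n ⊕ Fin n) → ℝ,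
        ∑ i, x i • Lmap (U i) = x + ∑ i, x i • (Lmap (U i) - eb i) := by
      intro x
      have h1 : ∀ i ∈ Finset.univ, x i • Lmap (U i)
          = x i • eb i + x i • (Lmap (U i) - eb i) := by
        intro i _
        rw [← smul_add]
        congr 1
        abel
      rw [Finset.sum_congr rfl h1, Finset.sum_add_distrib]
      congr 1
      exact (pi_eq_sum_univ x).symm
    have hrmem : ∀ x : (Fin n ⊕ Fin n) → ℝ,
        (∑ i, x i • (Lmap (U i) - eb i)) ∈ Vpi :=
      fun x => Submodule.sum_mem _ fun i _ => Submodule.smul_mem _ _ (hU i)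
    have key1 : ∀ uc : Lp (Fin k → ℝ) 2 μ, Pv uc = m ⬝ᵥ (Lmap uc) := by
      intro uc
      set x := Lmap uc with hx
      have hmem' : Lmap (uc - ∑ i, x i • U i) ∈ Vpi := by
        rw [map_sub, map_sum]
        simp only [_root_.map_smul]
        rw [hsum x]
        have hab : x - (x + ∑ i, x i • (Lmap (U i) - eb i))
            = -(∑ i, x i • (Lmap (U i) - eb i)) := by abel
        rw [hab]
        exact Submodule.neg_mem _ (hrmem x)
      have h0' := hφ0 _ hmem'
      rw [map_sub, map_sum] at h0'
      simp only [_root_.map_smul, smul_eq_mul] at h0'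
      have hPu : Pv uc = ∑ i, x i * Pv (U i) := by linarith
      rw [hPu]
      show ∑ i, x i * Pv (U i) = ∑ i, m i * x i
      exact Finset.sum_congr rfl fun i _ => mul_comm _ _
    have key2 : ∀ p ∈ Vpi, m ⬝ᵥ p = 0 := by
      intro p hp
      have hmem' : Lmap (∑ i, p i • U i) ∈ Vpi := by
        rw [map_sum]
        simp only [_root_.map_smul]
        rw [hsum p]
        exact Submodule.add_mem _ hp (hrmem p)
      have h0' := hφ0 _ hmem'
      rw [map_sum] at h0'
      simp only [_root_.map_smul, smul_eq_mul] at h0'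
      have hmp : m ⬝ᵥ p = ∑ i, p i * Pv (U i) :=
        Finset.sum_congr rfl fun i _ => mul_comm _ _
      rw [hmp]
      exact h0'
    have hm : Jmat n *ᵥ (-(Jmat n *ᵥ m)) = m := by
      rw [Matrix.mulVec_neg, Matrix.mulVec_mulVec, Jmat_mul_Jmat, Matrix.neg_mulVec,
        Matrix.one_mulVec, neg_neg]
    have hνmem : -(Jmat n *ᵥ m) ∈ Vpi := by
      apply lagrangian_max Vpi hVpidim hVpiLag
      intro p hp
      show (Jmat n *ᵥ p) ⬝ᵥ (-(Jmat n *ᵥ m)) = 0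
      rw [dotProduct_neg, mulVec_dot, Matrix.mulVec_mulVec]
      have hJtJ : (Jmat n)ᵀ * Jmat n = 1 := by
        rw [Jmat_transpose, Matrix.neg_mul, Jmat_mul_Jmat]
        simp
      rw [hJtJ, Matrix.one_mulVec, dotProduct_comm, key2 p hp, neg_zero]
    -- bounded representative
    let g : ℝ → (Fin k → ℝ) := fun t => (Z t)ᵀ *ᵥ m
    have hgm : AEStronglyMeasurable g μ := by
      rw [hμ]
      refine ContinuousOn.aestronglyMeasurable ?_ measurableSet_Icc
      have hlin : Continuous fun A : Matrix (Fin n ⊕ Fin n) (Fin k) ℝ => Aᵀ *ᵥ m := by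
        refine continuous_pi fun j => ?_
        have : (fun A : Matrix (Fin n ⊕ Fin n) (Fin k) ℝ => (Aᵀ *ᵥ m) j)
            = fun A => ∑ i, A i j * m i := by
          funext A
          simp [Matrix.mulVec, dotProduct, Matrix.transpose_apply]
        rw [this]
        exact continuous_finset_sum _ fun i _ =>
          ((Continuous.matrix_elem continuous_id i j).mul continuous_const)
      exact hlin.comp_continuousOn hZcont
    have hgb : ∀ᵐ t ∂μ, ‖g t‖ ≤ C * ∑ i, |m i| := by
      filter_upwards [hZae] with t ht
      refine (pi_norm_le_iff_of_nonneg (by positivity)).2 fun j => ?_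
      have hgtj : g t j = ∑ i, Z t i j * m i := by
        simp [g, Matrix.mulVec, dotProduct, Matrix.transpose_apply]
      rw [Real.norm_eq_abs, hgtj]
      calc |∑ i, Z t i j * m i| ≤ ∑ i, |Z t i j * m i| := Finset.abs_sum_le_sum_abs _ _
        _ ≤ ∑ i, C * |m i| := by
            refine Finset.sum_le_sum fun i _ => ?_
            rw [abs_mul]
            refine mul_le_mul_of_nonneg_right ?_ (abs_nonneg _)
            exact le_trans (Matrix.norm_entry_le_entrywise_sup_norm (Z t)) ht
        _ = C * ∑ i, |m i| := by rw [Finset.mul_sum]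
    have hg2 : MemLp g 2 μ := MemLp.of_bound hgm _ hgb
    let T : Lp (Fin k → ℝ) 2 μ := hg2.toLp g
    have hT : ⇑T =ᵐ[μ] g := hg2.coeFn_toLp
    have hPT : ∀ uc : Lp (Fin k → ℝ) 2 μ,
        (∫ t, (uc t) ⬝ᵥ (T t) ∂μ) = m ⬝ᵥ (Lmap uc) := by
      intro uc
      have h1 : (fun t => (uc t) ⬝ᵥ (T t)) =ᵐ[μ] fun t => (Z t *ᵥ uc t) ⬝ᵥ m := by
        filter_upwards [hT] with t ht
        rw [ht]
        show uc t ⬝ᵥ ((Z t)ᵀ *ᵥ m) = _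
        rw [← mulVec_dot]
      rw [integral_congr_ae h1, hpull m uc, dotProduct_comm]
    have hww : (∫ t, ((vc - T) t) ⬝ᵥ ((vc - T) t) ∂μ) = 0 := by
      have h1 : (fun t => ((vc - T) t) ⬝ᵥ ((vc - T) t)) =ᵐ[μ]
          fun t => ((vc - T) t) ⬝ᵥ (vc t) - ((vc - T) t) ⬝ᵥ (T t) := by
        filter_upwards [Lp.coeFn_sub vc T] with t ht
        rw [ht, Pi.sub_apply, dotProduct_sub]
      rw [integral_congr_ae h1, integral_sub (hdot (vc - T) vc) (hdot (vc - T) T)]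
      rw [show (∫ t, ((vc - T) t) ⬝ᵥ (vc t) ∂μ) = Pv (vc - T) from rfl]
      rw [key1 (vc - T), hPT (vc - T)]
      ring
    have hae0 : (fun t => ((vc - T) t) ⬝ᵥ ((vc - T) t)) =ᵐ[μ] 0 := by
      have hnn : 0 ≤ fun t => ((vc - T) t) ⬝ᵥ ((vc - T) t) :=
        fun t => Finset.sum_nonneg fun i _ => mul_self_nonneg _
      exact (integral_eq_zero_iff_of_nonneg hnn (hdot (vc - T) (vc - T))).1 hww
    have haegoal : ∀ᵐ t ∂μ, vc t = g t := by
      filter_upwards [hae0, Lp.coeFn_sub vc T, hT] with t h1 h2 h3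
      have hz : ((vc - T : Lp (Fin k → ℝ) 2 μ) : ℝ → (Fin k → ℝ)) t = 0 := by
        funext i
        have h4 := (Finset.sum_eq_zero_iff_of_nonneg
          fun i _ => mul_self_nonneg ((vc - T) t i)).1 h1 i (Finset.mem_univ i)
        exact mul_self_eq_zero.1 h4
      have hz2 : vc t - T t = 0 := by
        have h5 := h2.symm.trans hz
        simpa [Pi.sub_apply] using h5
      have hvT : vc t = T t := by rwa [sub_eq_zero] at hz2
      rw [hvT, h3]
    refine ⟨-(Jmat n *ᵥ m), hνmem, ?_, ?_, ?_⟩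
    · filter_upwards [haegoal] with t ht
      rw [hm]
      exact ht
    · intro w0
      obtain ⟨uc, huc⟩ := hsurj (-(Z0 *ᵥ w0))
      rw [hL uc, sub_neg_eq_add] at huc
      have h := hv (w0, uc, 0)
      simp only [Matrix.mulVec_zero, add_zero, gApp_zero_left] at h
      have hcon : Z0 *ᵥ w0 + (∫ t in (0:ℝ)..1, Z t *ᵥ uc t) ∈ Vpi := by
        rw [hL uc, add_comm]
        exact huc
      have h2 := h hcon
      rw [intConv μ hμ] at h2
      have hPuc : (∫ t, (uc t) ⬝ᵥ (vc t) ∂μ) = m ⬝ᵥ (Lmap uc) := key1 uc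
      have hmL : m ⬝ᵥ (Lmap uc) = -(m ⬝ᵥ (Z0 *ᵥ w0)) := by
        have hk := key2 _ huc
        rw [dotProduct_add] at hk
        linarith
      have hg0 : gApp G0 (Z0 *ᵥ w0) (Z0 *ᵥ v.1) = m ⬝ᵥ (Z0 *ᵥ w0) := by
        rw [hPuc, hmL] at h2
        linarith
      rw [gApp_sub_left, gApp_comm hG0sym (Z0 *ᵥ v.1) (Z0 *ᵥ w0), hg0, hJ0]
      show m ⬝ᵥ (Z0 *ᵥ w0) - (Jmat n *ᵥ (-(Jmat n *ᵥ m))) ⬝ᵥ (Z0 *ᵥ w0) = 0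
      rw [hm]
      ring
    · intro w1
      obtain ⟨uc, huc⟩ := hsurj (-(Z1 *ᵥ w1))
      rw [hL uc, sub_neg_eq_add] at huc
      have h := hv (0, uc, w1)
      simp only [Matrix.mulVec_zero, zero_add, gApp_zero_left, add_zero] at h
      have hcon : (∫ t in (0:ℝ)..1, Z t *ᵥ uc t) + Z1 *ᵥ w1 ∈ Vpi := by
        rw [hL uc]
        exact huc
      have h2 := h hcon
      rw [intConv μ hμ] at h2
      have hPuc : (∫ t, (uc t) ⬝ᵥ (vc t) ∂μ) = m ⬝ᵥ (Lmap uc) := key1 uc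
      have hmL : m ⬝ᵥ (Lmap uc) = -(m ⬝ᵥ (Z1 *ᵥ w1)) := by
        have hk := key2 _ huc
        rw [dotProduct_add] at hk
        linarith
      have hg1 : gApp G1 ((Φm * Z1) *ᵥ w1) ((Φm * Z1) *ᵥ v.2.2) = m ⬝ᵥ (Z1 *ᵥ w1) := by
        rw [hPuc, hmL] at h2
        linarith
      rw [gApp_sub_left, gApp_comm hG1sym ((Φm * Z1) *ᵥ v.2.2) ((Φm * Z1) *ᵥ w1), hg1]
      rw [show (J1 * Φm) *ᵥ (-(Jmat n *ᵥ m)) = J1 *ᵥ (Φm *ᵥ (-(Jmat n *ᵥ m)))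
        from (Matrix.mulVec_mulVec _ J1 Φm).symm]
      rw [show (Φm * Z1) *ᵥ w1 = Φm *ᵥ (Z1 *ᵥ w1) from (Matrix.mulVec_mulVec _ Φm Z1).symm]
      rw [hJ1, symp_mulVec hΦsymp]
      show m ⬝ᵥ (Z1 *ᵥ w1) - (Jmat n *ᵥ (-(Jmat n *ᵥ m))) ⬝ᵥ (Z1 *ᵥ w1) = 0
      rw [hm]
      ring
  · -- easy direction
    intro v hv
    simp only [Set.mem_setOf_eq] at hv ⊢
    obtain ⟨ν, hν, hae, h0, h1⟩ := hv
    intro u hu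
    rw [hL u.2.1] at hu
    have hterm1 : (∫ t in (0:ℝ)..1, (u.2.1 t) ⬝ᵥ (v.2.1 t))
        = (Jmat n *ᵥ ν) ⬝ᵥ (Lmap u.2.1) := by
      rw [intConv μ hμ]
      have hcong : (fun t => (u.2.1 t) ⬝ᵥ (v.2.1 t)) =ᵐ[μ]
          fun t => (Z t *ᵥ u.2.1 t) ⬝ᵥ (Jmat n *ᵥ ν) := by
        filter_upwards [hae] with t ht
        rw [ht, ← mulVec_dot]
      rw [integral_congr_ae hcong, hpull, dotProduct_comm]
    have hterm2 : gApp G0 (Z0 *ᵥ u.1) (Z0 *ᵥ v.1) = (Jmat n *ᵥ ν) ⬝ᵥ (Z0 *ᵥ u.1) := by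
      have e0 := h0 u.1
      rw [gApp_sub_left] at e0
      rw [gApp_comm hG0sym]
      have h4 : gApp G0 (Z0 *ᵥ v.1) (Z0 *ᵥ u.1) = gApp G0 (J0 *ᵥ ν) (Z0 *ᵥ u.1) := by
        linarith
      rw [h4, hJ0]
      rfl
    have hterm3 : gApp G1 ((Φm * Z1) *ᵥ u.2.2) ((Φm * Z1) *ᵥ v.2.2)
        = (Jmat n *ᵥ ν) ⬝ᵥ (Z1 *ᵥ u.2.2) := by
      have e1 := h1 u.2.2
      rw [gApp_sub_left] at e1
      rw [gApp_comm hG1sym]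
      have h4 : gApp G1 ((Φm * Z1) *ᵥ v.2.2) ((Φm * Z1) *ᵥ u.2.2)
          = gApp G1 ((J1 * Φm) *ᵥ ν) ((Φm * Z1) *ᵥ u.2.2) := by
        linarith
      rw [h4]
      rw [show (J1 * Φm) *ᵥ ν = J1 *ᵥ (Φm *ᵥ ν) from (Matrix.mulVec_mulVec _ J1 Φm).symm]
      rw [show (Φm * Z1) *ᵥ u.2.2 = Φm *ᵥ (Z1 *ᵥ u.2.2)
        from (Matrix.mulVec_mulVec _ Φm Z1).symm]
      rw [hJ1, symp_mulVec hΦsymp]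
      rfl
    rw [hterm1, hterm2, hterm3]
    have htot : (Jmat n *ᵥ ν) ⬝ᵥ (Z0 *ᵥ u.1 + Lmap u.2.1 + Z1 *ᵥ u.2.2) = 0 :=
      hVpiLag ν hν _ hu
    rw [dotProduct_add, dotProduct_add] at htot
    linarith
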